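/- (Lipschitz continuity of the objective integrand in the parameter θ.) Let Θ ⊂ ℝ^k be convex, and fix s > 0. Let L, f : ℝ → ℝ be continuously differentiable with |L| ≤ ℓ₀, |L′| ≤ ℓ₁ and |f′| ≤ f₁. Let φ₀ be continuously differentiable with |φ₀| ≤ B₀ and |φ₀′| ≤ B₁, and let φ₁ be measurable and bounded, |φ₁| ≤ B₂. Suppose p : Θ → ℝ is differentiable with ‖∇p(θ)‖ ≤ M₀ for all θ, and for each w the map θ ↦ φ(θ, w) is differentiable with values in [0, x₊] and ‖∇_θ φ(θ, w)‖ ≤ Λ(w). Let γ₋ > 0. Define Φ₁(x, γ) = ∫₀^x v^{1/γ} φ₁(v) dv, Φ₀(x, γ) = 1 − φ₀(x) + Φ₁(x, γ), and Ψ(π, x; S, γ) = L(1 − f(π))·[1 − S·Φ₀(x, γ)]. Then there exists a constant C, depending only on ℓ₀, ℓ₁, f₁, B₀, B₁, B₂, M₀, x₊, γ₋, such that for all θ, θ′ ∈ Θ, all w, all S ∈ [0, 1] and all γ ≥ γ₋: |Ψ(p(θ), φ(θ, w); S, γ) − Ψ(p(θ′), φ(θ′, w); S, γ)| ≤ C·(1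 + Λ(w))·‖θ − θ′‖. -/

import Mathlib

open MeasureTheory Set

/-- Auxiliary: a `C¹` function on `ℝ` with derivative bounded by `c` is `c`-Lipschitz. -/
lemma lip_of_deriv_bound (g : ℝ → ℝ) (hg : ContDiff ℝ 1 g) {c : ℝ}
    (hc : ∀ x, |deriv g x| ≤ c) (a b : ℝ) : |g a - g b| ≤ c * |a - b| := by
  have := Convex.norm_image_sub_le_of_norm_deriv_le
    (f := g) (s := (univ : Set ℝ))
    (fun x _ => (hg.differentiable one_ne_zero).differentiableAt)
    (fun x _ => hc x) convex_univ (mem_univ b) (mem_univ a)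
  simpa [Real.norm_eq_abs] using this

/-- Auxiliary: difference of integrals of a bounded measurable function over `Ioc 0 a`,
`Ioc 0 b`. -/
lemma int_diff_bound (g : ℝ → ℝ) (hm : Measurable g) {M a b : ℝ}
    (h0a : 0 ≤ a) (hab : a ≤ b)
    (hg : ∀ v ∈ Ioc (0:ℝ) b, |g v| ≤ M) :
    |(∫ v in Ioc (0:ℝ) b, g v) - ∫ v in Ioc (0:ℝ) a, g v| ≤ M * (b - a) := by
  have hMa : ∀ᵐ v ∂(volume.restrict (Ioc (0:ℝ) a)), ‖g v‖ ≤ M := by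
    filter_upwards [ae_restrict_mem measurableSet_Ioc] with v hv
    exact hg v ⟨hv.1, hv.2.trans hab⟩
  have hMb : ∀ v ∈ Ioc a b, ‖g v‖ ≤ M := fun v hv =>
    hg v ⟨h0a.trans_lt hv.1, hv.2⟩
  have hInt1 : IntegrableOn g (Ioc (0:ℝ) a) := by
    refine Measure.integrableOn_of_bounded (M := M) (by simp) hm.aestronglyMeasurable hMa
  have hInt2 : IntegrableOn g (Ioc a b) := by
    refine Measure.integrableOn_of_bounded (M := M) (by simp) hm.aestronglyMeasurable ?_
    filter_upwards [ae_restrict_mem measurableSet_Ioc] with v hv using hMb v hv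
  have hsplit : (∫ v in Ioc (0:ℝ) b, g v)
      = (∫ v in Ioc (0:ℝ) a, g v) + ∫ v in Ioc a b, g v := by
    rw [← setIntegral_union (Ioc_disjoint_Ioc_of_le le_rfl) measurableSet_Ioc hInt1 hInt2,
      Ioc_union_Ioc_eq_Ioc h0a hab]
  have hbnd : ‖∫ v in Ioc a b, g v‖ ≤ M * (volume (Ioc a b)).toReal :=
    norm_setIntegral_le_of_norm_le_const (μ := volume) (by simp) hMb
  rw [Real.volume_Ioc, ENNReal.toReal_ofReal (by linarith)] at hbnd
  calc |(∫ v in Ioc (0:ℝ) b, g v) - ∫ v in Ioc (0:ℝ) a, g v|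
      = ‖∫ v in Ioc a b, g v‖ := by rw [hsplit]; simp [Real.norm_eq_abs]
    _ ≤ M * (b - a) := hbnd

set_option maxHeartbeats 1000000 in
/-- Lipschitz continuity of the objective integrand
`Ψ(π, x; S, γ) = L(1 − f(π))·[1 − S·Φ₀(x, γ)]` in the parameter `θ`, where
`Φ₀(x, γ) = 1 − φ₀(x) + ∫₀^x v^{1/γ} φ₁(v) dv`: there is a constant `C` (depending
only on the bounds) such that for all `θ, θ′ ∈ Θ`, all `w`, all `S ∈ [0,1]` and
`γ ≥ γ₋`, `|Ψ(p(θ), φ(θ,w); S, γ) − Ψ(p(θ′), φ(θ′,w); S, γ)| ≤ C(1 + Λ(w))‖θ − θ′‖`. -/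
theorem statement12 {k : ℕ} {D : Type*}
    (Θ : Set (Fin k → ℝ)) (hΘ : Convex ℝ Θ)
    (L f : ℝ → ℝ) (hL : ContDiff ℝ 1 L) (hf : ContDiff ℝ 1 f)
    (ℓ₀ ℓ₁ f₁ : ℝ) (hLb : ∀ x, |L x| ≤ ℓ₀) (hL'b : ∀ x, |deriv L x| ≤ ℓ₁)
    (hf'b : ∀ x, |deriv f x| ≤ f₁)
    (φ₀ : ℝ → ℝ) (hφ₀ : ContDiff ℝ 1 φ₀) (B₀ B₁ B₂ : ℝ)
    (hφ₀b : ∀ x, |φ₀ x| ≤ B₀) (hφ₀'b : ∀ x, |deriv φ₀ x| ≤ B₁)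
    (φ₁ : ℝ → ℝ) (hφ₁meas : Measurable φ₁) (hφ₁b : ∀ x, |φ₁ x| ≤ B₂)
    (p : (Fin k → ℝ) → ℝ) (M₀ : ℝ)
    (hp : DifferentiableOn ℝ p Θ)
    (hpb : ∀ θ ∈ Θ, ‖fderivWithin ℝ p Θ θ‖ ≤ M₀)
    (φ : (Fin k → ℝ) → D → ℝ) (xhi : ℝ) (Λ : D → ℝ)
    (hφdiff : ∀ w, DifferentiableOn ℝ (fun θ => φ θ w) Θ)
    (hφrange : ∀ θ ∈ Θ, ∀ w, φ θ w ∈ Icc (0:ℝ) xhi)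
    (hφgrad : ∀ w, ∀ θ ∈ Θ, ‖fderivWithin ℝ (fun θ' => φ θ' w) Θ θ‖ ≤ Λ w)
    (γlo : ℝ) (hγlo : 0 < γlo) :
    ∃ C : ℝ, ∀ θ ∈ Θ, ∀ θ' ∈ Θ, ∀ w : D, ∀ S ∈ Icc (0:ℝ) 1, ∀ γ : ℝ, γlo ≤ γ →
      |L (1 - f (p θ)) *
          (1 - S * (1 - φ₀ (φ θ w) + ∫ v in Ioc (0:ℝ) (φ θ w), v ^ (1 / γ) * φ₁ v))
        - L (1 - f (p θ')) *
          (1 - S * (1 - φ₀ (φ θ' w) + ∫ v in Ioc (0:ℝ) (φ θ' w), v ^ (1 / γ) * φ₁ v))|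
      ≤ C * (1 + Λ w) * ‖θ - θ'‖ := by
  classical
  set K : ℝ := max 1 ((max 1 xhi) ^ (1 / γlo)) with hKdef
  have hK1 : (1:ℝ) ≤ K := le_max_left _ _
  have hK0 : (0:ℝ) ≤ K := zero_le_one.trans hK1
  -- nonnegativity of the bounds
  have hℓ₀ : 0 ≤ ℓ₀ := (abs_nonneg _).trans (hLb 0)
  have hℓ₁ : 0 ≤ ℓ₁ := (abs_nonneg _).trans (hL'b 0)
  have hf₁ : 0 ≤ f₁ := (abs_nonneg _).trans (hf'b 0)
  have hB₀ : 0 ≤ B₀ := (abs_nonneg _).trans (hφ₀b 0)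
  have hB₁ : 0 ≤ B₁ := (abs_nonneg _).trans (hφ₀'b 0)
  have hB₂ : 0 ≤ B₂ := (abs_nonneg _).trans (hφ₁b 0)
  refine ⟨ℓ₀ * (B₁ + K * B₂) + (2 + B₀ + K * B₂ * xhi) * (ℓ₁ * (f₁ * M₀)),
    fun θ hθ θ' hθ' w S hS γ hγ => ?_⟩
  have hM₀ : 0 ≤ M₀ := (norm_nonneg _).trans (hpb θ hθ)
  have hΛw : 0 ≤ Λ w := (norm_nonneg _).trans (hφgrad w θ hθ)
  have hx : φ θ w ∈ Icc (0:ℝ) xhi := hφrange θ hθ w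
  have hx' : φ θ' w ∈ Icc (0:ℝ) xhi := hφrange θ' hθ' w
  have hxhi : 0 ≤ xhi := hx.1.trans hx.2
  have hγpos : 0 < γ := hγlo.trans_le hγ
  -- pointwise bound on the integrand
  have hgbound : ∀ v ∈ Ioc (0:ℝ) xhi, |v ^ (1 / γ) * φ₁ v| ≤ K * B₂ := by
    intro v hv
    have hv0 : (0:ℝ) ≤ v := hv.1.le
    have hrpow0 : 0 ≤ v ^ (1 / γ) := Real.rpow_nonneg hv0 _
    have hrK : v ^ (1 / γ) ≤ K := by
      rcases le_or_gt v 1 with h1 | h1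
      · exact (Real.rpow_le_one hv0 h1 (by positivity)).trans hK1
      · calc v ^ (1 / γ) ≤ v ^ (1 / γlo) :=
              Real.rpow_le_rpow_of_exponent_le h1.le
                (one_div_le_one_div_of_le hγlo hγ)
          _ ≤ (max 1 xhi) ^ (1 / γlo) :=
              Real.rpow_le_rpow hv0 (le_max_of_le_right hv.2) (by positivity)
          _ ≤ K := le_max_right _ _
    calc |v ^ (1 / γ) * φ₁ v| = v ^ (1 / γ) * |φ₁ v| := by
          rw [abs_mul, abs_of_nonneg hrpow0]
      _ ≤ K * B₂ := mul_le_mul hrK (hφ₁b v) (abs_nonneg _) hK0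
  -- difference of integrals, for any two endpoints in [0, xhi]
  have hmeas : Measurable (fun v : ℝ => v ^ (1 / γ) * φ₁ v) := by fun_prop
  have key : ∀ a b : ℝ, a ∈ Icc (0:ℝ) xhi → b ∈ Icc (0:ℝ) xhi →
      |(∫ v in Ioc (0:ℝ) b, v ^ (1 / γ) * φ₁ v)
        - ∫ v in Ioc (0:ℝ) a, v ^ (1 / γ) * φ₁ v| ≤ K * B₂ * |b - a| := by
    intro a b ha hb
    rcases le_total a b with hab | hab
    · have := int_diff_bound _ hmeas ha.1 hab
        (fun v hv => hgbound v ⟨hv.1, hv.2.trans hb.2⟩)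
      rw [abs_of_nonneg (sub_nonneg.mpr hab)]
      exact this
    · have := int_diff_bound _ hmeas hb.1 hab
        (fun v hv => hgbound v ⟨hv.1, hv.2.trans ha.2⟩)
      rw [abs_sub_comm, abs_of_nonpos (sub_nonpos.mpr hab), neg_sub]
      exact this
  -- bound on the integral itself
  have hzero : (∫ v in Ioc (0:ℝ) (0:ℝ), v ^ (1 / γ) * φ₁ v) = 0 := by simp
  have hIbound : ∀ y ∈ Icc (0:ℝ) xhi,
      |∫ v in Ioc (0:ℝ) y, v ^ (1 / γ) * φ₁ v| ≤ K * B₂ * xhi := by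
    intro y hy
    have := key 0 y ⟨le_refl 0, hxhi⟩ hy
    rw [hzero, sub_zero, sub_zero, abs_of_nonneg hy.1] at this
    exact this.trans (mul_le_mul_of_nonneg_left hy.2 (mul_nonneg hK0 hB₂))
  -- abbreviations
  set A : ℝ := L (1 - f (p θ)) with hA
  set A' : ℝ := L (1 - f (p θ')) with hA'
  set Φx : ℝ := 1 - φ₀ (φ θ w) + ∫ v in Ioc (0:ℝ) (φ θ w), v ^ (1 / γ) * φ₁ v with hΦx
  set Φx' : ℝ := 1 - φ₀ (φ θ' w) + ∫ v in Ioc (0:ℝ) (φ θ' w), v ^ (1 / γ) * φ₁ v with hΦx'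
  -- bound |A| and |1 - S Φx'|
  have hAb : |A| ≤ ℓ₀ := hLb _
  have hΦx'b : |Φx'| ≤ 1 + B₀ + K * B₂ * xhi := by
    rw [hΦx']
    calc |1 - φ₀ (φ θ' w) + ∫ v in Ioc (0:ℝ) (φ θ' w), v ^ (1 / γ) * φ₁ v|
        ≤ |1 - φ₀ (φ θ' w)| + |∫ v in Ioc (0:ℝ) (φ θ' w), v ^ (1 / γ) * φ₁ v| :=
          abs_add_le _ _
      _ ≤ (1 + B₀) + K * B₂ * xhi := by
          gcongr
          · calc |1 - φ₀ (φ θ' w)| ≤ |(1:ℝ)| + |φ₀ (φ θ' w)| := abs_sub _ _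
              _ ≤ 1 + B₀ := by rw [abs_one]; gcongr; exact hφ₀b _
          · exact hIbound _ hx'
  have hSle : |S| ≤ 1 := by rw [abs_of_nonneg hS.1]; exact hS.2
  have hBx'b : |1 - S * Φx'| ≤ 2 + B₀ + K * B₂ * xhi := by
    have h1 : |S * Φx'| ≤ 1 * (1 + B₀ + K * B₂ * xhi) := by
      rw [abs_mul]
      exact mul_le_mul hSle hΦx'b (abs_nonneg _) zero_le_one
    have h2 : |1 - S * Φx'| ≤ |(1:ℝ)| + |S * Φx'| := abs_sub _ _
    rw [abs_one] at h2
    linarith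
  -- Lipschitz bound for A
  have hpdiff : |p θ - p θ'| ≤ M₀ * ‖θ - θ'‖ := by
    have := hΘ.norm_image_sub_le_of_norm_fderivWithin_le hp hpb hθ' hθ
    simpa [Real.norm_eq_abs] using this
  have hfdiff : |f (p θ) - f (p θ')| ≤ f₁ * (M₀ * ‖θ - θ'‖) := by
    calc |f (p θ) - f (p θ')| ≤ f₁ * |p θ - p θ'| :=
          lip_of_deriv_bound f hf hf'b _ _
      _ ≤ f₁ * (M₀ * ‖θ - θ'‖) := by gcongr
  have hAdiff : |A - A'| ≤ ℓ₁ * (f₁ * (M₀ * ‖θ - θ'‖)) := by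
    calc |A - A'| ≤ ℓ₁ * |(1 - f (p θ)) - (1 - f (p θ'))| :=
          lip_of_deriv_bound L hL hL'b _ _
      _ = ℓ₁ * |f (p θ) - f (p θ')| := by rw [show (1 - f (p θ)) - (1 - f (p θ'))
            = -(f (p θ) - f (p θ')) by ring, abs_neg]
      _ ≤ ℓ₁ * (f₁ * (M₀ * ‖θ - θ'‖)) := by gcongr
  -- Lipschitz bound for φ in θ
  have hφLip : |φ θ w - φ θ' w| ≤ Λ w * ‖θ - θ'‖ := by
    have := hΘ.norm_image_sub_le_of_norm_fderivWithin_le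
      (hφdiff w) (hφgrad w) hθ' hθ
    simpa [Real.norm_eq_abs] using this
  -- Lipschitz bound for Φ
  have hΦdiff : |Φx - Φx'| ≤ (B₁ + K * B₂) * (Λ w * ‖θ - θ'‖) := by
    have h1 : |φ₀ (φ θ' w) - φ₀ (φ θ w)| ≤ B₁ * |φ θ w - φ θ' w| := by
      rw [abs_sub_comm]
      exact lip_of_deriv_bound φ₀ hφ₀ hφ₀'b _ _
    have h2 := key (φ θ' w) (φ θ w) hx' hx
    calc |Φx - Φx'|
        = |(φ₀ (φ θ' w) - φ₀ (φ θ w))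
            + ((∫ v in Ioc (0:ℝ) (φ θ w), v ^ (1 / γ) * φ₁ v)
              - ∫ v in Ioc (0:ℝ) (φ θ' w), v ^ (1 / γ) * φ₁ v)| := by
          rw [hΦx, hΦx']; ring_nf
      _ ≤ |φ₀ (φ θ' w) - φ₀ (φ θ w)|
            + |(∫ v in Ioc (0:ℝ) (φ θ w), v ^ (1 / γ) * φ₁ v)
              - ∫ v in Ioc (0:ℝ) (φ θ' w), v ^ (1 / γ) * φ₁ v| := abs_add_le _ _
      _ ≤ B₁ * |φ θ w - φ θ' w| + K * B₂ * |φ θ w - φ θ' w| := by gcongr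
      _ = (B₁ + K * B₂) * |φ θ w - φ θ' w| := by ring
      _ ≤ (B₁ + K * B₂) * (Λ w * ‖θ - θ'‖) :=
          mul_le_mul_of_nonneg_left hφLip (by positivity)
  -- assemble
  have decomp : A * (1 - S * Φx) - A' * (1 - S * Φx')
      = A * (S * (Φx' - Φx)) + (A - A') * (1 - S * Φx') := by ring
  calc |A * (1 - S * Φx) - A' * (1 - S * Φx')|
      = |A * (S * (Φx' - Φx)) + (A - A') * (1 - S * Φx')| := by rw [decomp]
    _ ≤ |A * (S * (Φx' - Φx))| + |(A - A') * (1 - S * Φx')| := abs_add_le _ _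
    _ = |A| * (|S| * |Φx' - Φx|) + |A - A'| * |1 - S * Φx'| := by
        rw [abs_mul, abs_mul, abs_mul]
    _ ≤ ℓ₀ * (1 * ((B₁ + K * B₂) * (Λ w * ‖θ - θ'‖)))
        + (ℓ₁ * (f₁ * (M₀ * ‖θ - θ'‖))) * (2 + B₀ + K * B₂ * xhi) := by
        have hΦd' : |Φx' - Φx| ≤ (B₁ + K * B₂) * (Λ w * ‖θ - θ'‖) := by
          rw [abs_sub_comm]; exact hΦdiff
        have t1 : |A| * (|S| * |Φx' - Φx|)
            ≤ ℓ₀ * (1 * ((B₁ + K * B₂) * (Λ w * ‖θ - θ'‖))) :=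
          mul_le_mul hAb
            (mul_le_mul hSle hΦd' (abs_nonneg _) zero_le_one)
            (mul_nonneg (abs_nonneg _) (abs_nonneg _)) hℓ₀
        have t2 : |A - A'| * |1 - S * Φx'|
            ≤ (ℓ₁ * (f₁ * (M₀ * ‖θ - θ'‖))) * (2 + B₀ + K * B₂ * xhi) :=
          mul_le_mul hAdiff hBx'b (abs_nonneg _) (by positivity)
        exact add_le_add t1 t2
    _ ≤ (ℓ₀ * (B₁ + K * B₂) + (2 + B₀ + K * B₂ * xhi) * (ℓ₁ * (f₁ * M₀)))
        * (1 + Λ w) * ‖θ - θ'‖ := by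
        have h1 : 0 ≤ ℓ₀ * (B₁ + K * B₂) := by positivity
        have h2 : 0 ≤ (2 + B₀ + K * B₂ * xhi) * (ℓ₁ * (f₁ * M₀)) := by positivity
        have hn : 0 ≤ ‖θ - θ'‖ := norm_nonneg _
        have hr : (ℓ₀ * (B₁ + K * B₂) + (2 + B₀ + K * B₂ * xhi) * (ℓ₁ * (f₁ * M₀)))
              * (1 + Λ w) * ‖θ - θ'‖
            - (ℓ₀ * (1 * ((B₁ + K * B₂) * (Λ w * ‖θ - θ'‖)))
              + (ℓ₁ * (f₁ * (M₀ * ‖θ - θ'‖))) * (2 + B₀ + K * B₂ * xhi))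
            = ℓ₀ * (B₁ + K * B₂) * ‖θ - θ'‖
              + (2 + B₀ + K * B₂ * xhi) * (ℓ₁ * (f₁ * M₀)) * (Λ w * ‖θ - θ'‖) := by
          ring
        have e1 : 0 ≤ ℓ₀ * (B₁ + K * B₂) * ‖θ - θ'‖ := mul_nonneg h1 hn
        have e2 : 0 ≤ (2 + B₀ + K * B₂ * xhi) * (ℓ₁ * (f₁ * M₀)) * (Λ w * ‖θ - θ'‖) :=
          mul_nonneg h2 (mul_nonneg hΛw hn)
        linarith
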